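/- Summation-by-parts entropy estimate: if a two-point flux f* satisfies Tadmor's condition (w_{i+1} − w_i)·f*_{i+1/2} − (Ψ_{i+1} − Ψ_i) ≤ 0 at every interface of a periodic grid, and the scheme is (u_i)_t + (f*_{i+1/2} − f*_{i-1/2})/h = 0, then the total discrete entropy is non-increasing: d/dt Σ_i h·U(u_i) ≤ 0, where U is a convex entropy with entropy variable w = U', entropy flux F with U'f' = F', and Ψ = w·f − F. -/

import Mathlib

/-- Summation-by-parts entropy estimate: if a two-point numerical flux `fs`
satisfies Tadmor's condition at every interface of a periodic grid, and the
scheme is the finite volume scheme `(uᵢ)ₜ + (f*_{i+1/2} − f*_{i-1/2})/h = 0`,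
then the total discrete entropy `Σᵢ h U(uᵢ)` is non-increasing. Here `U` is a
convex entropy with entropy variable `w = U'`, entropy flux `F` with
`U'·f' = F'`, and entropy potential `Ψ = w·f − F`. -/
theorem sbp_entropy_estimate
    (N : ℕ) [NeZero N] (h : ℝ) (hh : 0 < h)
    (U w F f Ψ : ℝ → ℝ)
    (hU : ∀ x, HasDerivAt U (w x) x)
    (hUconv : ConvexOn ℝ Set.univ U)
    (hcompat : ∀ x, w x * deriv f x = deriv F x)
    (hΨ : ∀ x, Ψ x = w x * f x - F x)
    (fs : ℝ → ℝ → ℝ)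
    (u : ℝ → ZMod N → ℝ)
    (htadmor : ∀ (t : ℝ) (i : ZMod N),
      (w (u t (i + 1)) - w (u t i)) * fs (u t i) (u t (i + 1))
        - (Ψ (u t (i + 1)) - Ψ (u t i)) ≤ 0)
    (hode : ∀ (t : ℝ) (i : ZMod N),
      HasDerivAt (fun s => u s i)
        (-((fs (u t i) (u t (i + 1)) - fs (u t (i - 1)) (u t i)) / h)) t) :
    ∀ t : ℝ, deriv (fun s => ∑ i : ZMod N, h * U (u s i)) t ≤ 0 := by

  intro t
  have hd : HasDerivAt (fun s => ∑ i : ZMod N, h * U (u s i))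
      (∑ i : ZMod N, h * (w (u t i) *
        (-((fs (u t i) (u t (i + 1)) - fs (u t (i - 1)) (u t i)) / h)))) t := by
    apply HasDerivAt.fun_sum
    intro i _
    exact ((hU (u t i)).comp t (hode t i)).const_mul h
  rw [hd.deriv]
  have hne : h ≠ 0 := ne_of_gt hh
  have hterm : ∀ i : ZMod N,
      h * (w (u t i) * (-((fs (u t i) (u t (i + 1)) - fs (u t (i - 1)) (u t i)) / h)))
      = w (u t i) * fs (u t (i - 1)) (u t i) - w (u t i) * fs (u t i) (u t (i + 1)) := by
    intro i; field_simp; ring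
  rw [Finset.sum_congr rfl (fun i _ => hterm i), Finset.sum_sub_distrib]
  have hshift : ∑ i : ZMod N, w (u t i) * fs (u t (i - 1)) (u t i)
      = ∑ i : ZMod N, w (u t (i + 1)) * fs (u t i) (u t (i + 1)) := by
    refine (Fintype.sum_equiv (Equiv.addRight (1 : ZMod N))
      (fun i => w (u t (i + 1)) * fs (u t i) (u t (i + 1)))
      (fun j => w (u t j) * fs (u t (j - 1)) (u t j)) (fun i => by simp)).symm
  rw [hshift, ← Finset.sum_sub_distrib]
  have key : ∑ i : ZMod N,
      (w (u t (i + 1)) * fs (u t i) (u t (i + 1)) - w (u t i) * fs (u t i) (u t (i + 1)))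
      ≤ ∑ i : ZMod N, (Ψ (u t (i + 1)) - Ψ (u t i)) := by
    apply Finset.sum_le_sum
    intro i _
    have := htadmor t i
    nlinarith [htadmor t i]
  have hzero : ∑ i : ZMod N, (Ψ (u t (i + 1)) - Ψ (u t i)) = 0 := by
    rw [Finset.sum_sub_distrib]
    have : ∑ i : ZMod N, Ψ (u t (i + 1)) = ∑ i : ZMod N, Ψ (u t i) := by
      refine Fintype.sum_equiv (Equiv.addRight (1 : ZMod N))
        (fun i => Ψ (u t (i + 1))) (fun j => Ψ (u t j)) (fun i => by simp)
    rw [this, sub_self]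
  linarith [key, hzero.le]
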